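/- If κ is measurable and T is a κ-Suslin tree with a δ-ascent path for some regular δ < κ, then a contradiction follows; hence a measurable cardinal κ carries no δ-ascent κ-Suslin tree for any regular δ < κ. -/

import Mathlib

universe u

/-- An abstract tree: a strict order in which the set of predecessors of any node
is linearly ordered, together with a height (level) function. -/
structure PTree : Type (u + 1) where
  Node : Type u
  lt : Node → Node → Prop
  lt_trans : ∀ {a b c : Node}, lt a b → lt b c → lt a c
  ht : Node → Ordinal.{u}
  lt_ht : ∀ {a b : Node}, lt a b → ht a < ht b
  below_linear : ∀ {a b c : Node}, lt a c → lt b c → lt a b ∨ a = b ∨ lt b a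

/-- `T` has height `κ`: all nodes live on levels `< κ` and every level `< κ` is nonempty. -/
def PTree.HeightIs (T : PTree.{u}) (κ : Ordinal.{u}) : Prop :=
  (∀ x : T.Node, T.ht x < κ) ∧ ∀ α < κ, ∃ x : T.Node, T.ht x = α

def PTree.IsAntichainIn (T : PTree.{u}) (A : Set T.Node) : Prop :=
  ∀ a ∈ A, ∀ b ∈ A, a ≠ b → ¬ T.lt a b ∧ ¬ T.lt b a

def PTree.IsChainIn (T : PTree.{u}) (C : Set T.Node) : Prop :=
  ∀ a ∈ C, ∀ b ∈ C, a = b ∨ T.lt a b ∨ T.lt b a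

/-- `T` is a `κ`-Suslin tree: it has height `κ` and every antichain and every chain
has size `< κ`. -/
def PTree.IsSuslin (T : PTree.{u}) (κ : Cardinal.{u}) : Prop :=
  T.HeightIs κ.ord ∧ (∀ A : Set T.Node, T.IsAntichainIn A → Cardinal.mk A < κ) ∧
    ∀ C : Set T.Node, T.IsChainIn C → Cardinal.mk C < κ

/-- `f` is a `δ`-ascent path through the tree `T` of height `κ`:
`f α : δ → Lev_α(T)` and for `α < β < κ` the set of `υ < δ` with
`f α υ <_T f β υ` is co-bounded in `δ`. -/
def PTree.AscentPath (T : PTree.{u}) (κ δ : Ordinal.{u})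
    (f : Ordinal.{u} → Ordinal.{u} → T.Node) : Prop :=
  (∀ α < κ, ∀ υ < δ, T.ht (f α υ) = α) ∧
    ∀ α β : Ordinal.{u}, α < β → β < κ →
      ∃ θ < δ, ∀ υ : Ordinal.{u}, θ ≤ υ → υ < δ → T.lt (f α υ) (f β υ)

/-- `U` is `δ`-complete: it is closed under intersections of fewer than `δ` many sets. -/
def UFComplete {α : Type u} (δ : Cardinal.{u}) (U : Ultrafilter α) : Prop :=
  ∀ s : Set (Set α), Cardinal.mk s < δ → (∀ t ∈ s, t ∈ U) → ⋂₀ s ∈ U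

/-- `U` is uniform: every member of `U` has full cardinality. -/
def UFUniform {α : Type u} (U : Ultrafilter α) : Prop :=
  ∀ A ∈ U, Cardinal.mk A = Cardinal.mk α

section Aux

variable {α : Type u} {κ : Cardinal.{u}} {U : Ultrafilter α}

/-- Indexed-intersection form of `δ`-completeness. -/
lemma UFComplete.iInter_mem (hcomp : UFComplete κ U) {ι : Type u}
    (hι : Cardinal.mk ι < κ) (g : ι → Set α) (hg : ∀ i, g i ∈ U) :
    (⋂ i, g i) ∈ U := by
  have h1 : Cardinal.mk (Set.range g) < κ := lt_of_le_of_lt Cardinal.mk_range_le hι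
  have h2 := hcomp (Set.range g) h1 (by rintro t ⟨i, rfl⟩; exact hg i)
  rwa [Set.sInter_range] at h2

/-- If a union of fewer than `κ` many sets is in a `κ`-complete ultrafilter,
one of the sets is. -/
lemma UFComplete.exists_mem_of_iUnion_mem (hcomp : UFComplete κ U) {ι : Type u}
    (hι : Cardinal.mk ι < κ) (g : ι → Set α) (hU : (⋃ i, g i) ∈ U) :
    ∃ i, g i ∈ U := by
  by_contra h
  push_neg at h
  have h1 : (⋂ i, (g i)ᶜ) ∈ U :=
    hcomp.iInter_mem hι _ fun i => Ultrafilter.compl_mem_iff_notMem.mpr (h i)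
  have h2 : ((⋃ i, g i) ∩ ⋂ i, (g i)ᶜ) ∈ U := Filter.inter_mem hU h1
  have h3 : ((⋃ i, g i) ∩ ⋂ i, (g i)ᶜ) = (∅ : Set α) := by
    ext x
    simp only [Set.mem_inter_iff, Set.mem_iUnion, Set.mem_iInter, Set.mem_compl_iff,
      Set.mem_empty_iff_false, iff_false]
    rintro ⟨⟨i, hi⟩, hall⟩
    exact hall i hi
  rw [h3] at h2
  exact U.empty_notMem h2

/-- In a `κ`-complete nonprincipal ultrafilter, no set of size `< κ` is a member. -/
lemma UFComplete.small_not_mem (hcomp : UFComplete κ U)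
    (hnp : ∀ x : α, ({x} : Set α)ᶜ ∈ U) {A : Set α}
    (hA : Cardinal.mk A < κ) : A ∉ U := by
  intro hmem
  have h1 : (⋂ x : A, (({(x : α)} : Set α)ᶜ)) ∈ U :=
    hcomp.iInter_mem hA _ fun x => hnp x
  have h2 : (⋂ x : A, (({(x : α)} : Set α)ᶜ)) = Aᶜ := by
    ext y
    simp only [Set.mem_iInter, Set.mem_compl_iff, Set.mem_singleton_iff, Subtype.forall]
    constructor
    · intro h hy
      exact h y hy rfl
    · rintro hy x hx rfl
      exact hy hx
  rw [h2] at h1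
  exact Ultrafilter.compl_mem_iff_notMem.mp h1 hmem

end Aux

/-- A measurable cardinal `κ` carries no `δ`-ascent `κ`-Suslin tree for any regular
`δ < κ`: if `κ` is measurable and `T` is a `κ`-Suslin tree with a `δ`-ascent path,
a contradiction follows. -/
theorem no_ascent_suslin_at_measurable (κ δ : Cardinal.{u})
    (hδ : δ.IsRegular) (hδκ : δ < κ)
    (hmeas : ∃ (α : Type u) (_ : Cardinal.mk α = κ) (U : Ultrafilter α),
      UFComplete κ U ∧ ∀ x : α, ({x} : Set α)ᶜ ∈ U)
    (htree : ∃ (T : PTree.{u}) (f : Ordinal.{u} → Ordinal.{u} → T.Node),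
      T.IsSuslin κ ∧ T.AscentPath κ.ord δ.ord f) :
    False := by
  classical
  obtain ⟨X, hX, U, hcomp, hnp⟩ := hmeas
  obtain ⟨T, f, ⟨⟨hht, hlev⟩, hanti, hchain⟩, hf1, hf2⟩ := htree
  have hκinf : Cardinal.aleph0 ≤ κ := le_trans hδ.aleph0_le hδκ.le
  have hκlim : Order.IsSuccLimit (Cardinal.ord κ) := Cardinal.isSuccLimit_ord hκinf
  -- enumerations of ordinals below `κ.ord` and `δ.ord` by small types
  set κo := κ.ord with hκo
  set δo := δ.ord with hδo
  have hmkK : Cardinal.mk κo.ToType = κ := by rw [Cardinal.mk_toType, Cardinal.card_ord]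
  have hmkD : Cardinal.mk δo.ToType = δ := by rw [Cardinal.mk_toType, Cardinal.card_ord]
  obtain ⟨E⟩ : Nonempty (X ≃ κo.ToType) := Cardinal.eq.mp (hX.trans hmkK.symm)
  set i : X → Ordinal.{u} := fun a => ((Ordinal.ToType.mk (o := κo)).symm (E a) : Ordinal) with hi
  have hilt : ∀ a : X, i a < κo := fun a => ((Ordinal.ToType.mk (o := κo)).symm (E a)).2
  have hiinj : Function.Injective i := by
    intro a b hab
    apply E.injective
    apply (Ordinal.ToType.mk (o := κo)).symm.injective
    exact Subtype.ext hab
  set j : δo.ToType → Ordinal.{u} := fun x => ((Ordinal.ToType.mk (o := δo)).symm x : Ordinal)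
    with hj
  have hjlt : ∀ x, j x < δo := fun x => ((Ordinal.ToType.mk (o := δo)).symm x).2
  have hjsurj : ∀ θ < δo, ∃ x, j x = θ := by
    intro θ hθ
    refine ⟨Ordinal.ToType.mk (o := δo) ⟨θ, hθ⟩, ?_⟩
    simp [hj]
  -- tails are in the ultrafilter
  have hbig : ∀ γ < κo, {a : X | γ < i a} ∈ U := by
    intro γ hγ
    have hsucc : Order.succ γ < κo := hκlim.succ_lt hγ
    rcases U.mem_or_compl_mem {a : X | γ < i a} with h | h
    · exact h
    · exfalso
      have hcompl : {a : X | γ < i a}ᶜ = {a : X | i a ≤ γ} := by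
        ext a; simp [not_lt]
      rw [hcompl] at h
      have hsmall : Cardinal.mk {a : X | i a ≤ γ} < κ := by
        have hinj : Function.Injective
            (fun a : {a : X | i a ≤ γ} =>
              Ordinal.ToType.mk (o := Order.succ γ) ⟨i a.1, show i a.1 < Order.succ γ from Order.lt_succ_iff.mpr a.2⟩) := by
          intro a b hab
          have := (Ordinal.ToType.mk (o := Order.succ γ)).injective hab
          have h2 : i a.1 = i b.1 := Subtype.mk_eq_mk.mp this
          exact Subtype.ext (hiinj h2)
        calc Cardinal.mk {a : X | i a ≤ γ}
            ≤ Cardinal.mk (Order.succ γ : Ordinal).ToType := Cardinal.mk_le_of_injective hinj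
          _ = (Order.succ γ : Ordinal).card := Cardinal.mk_toType _
          _ < κ := Cardinal.lt_ord.mp hsucc
      exact hcomp.small_not_mem hnp hsmall h
  -- the key family of sets
  set Q : Ordinal.{u} → δo.ToType → Set X := fun γ x =>
    {a : X | γ < i a ∧ ∀ υ, j x ≤ υ → υ < δo → T.lt (f γ υ) (f (i a) υ)} with hQ
  have hmkDκ : Cardinal.mk δo.ToType < κ := by rw [hmkD]; exact hδκ
  have hQex : ∀ γ < κo, ∃ x, Q γ x ∈ U := by
    intro γ hγ
    apply hcomp.exists_mem_of_iUnion_mem hmkDκ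
    apply Filter.mem_of_superset (hbig γ hγ)
    intro a ha
    obtain ⟨θ, hθδ, hθ⟩ := hf2 γ (i a) ha (hilt a)
    obtain ⟨x, rfl⟩ := hjsurj θ hθδ
    exact Set.mem_iUnion.mpr ⟨x, ha, hθ⟩
  -- choose a good bound for each level
  have h0κ : (0 : Ordinal.{u}) < κo := hκlim.pos
  set t : Ordinal.{u} → δo.ToType := fun γ =>
    if h : γ < κo then (hQex γ h).choose else (hQex 0 h0κ).choose with ht
  have htspec : ∀ γ (h : γ < κo), Q γ (t γ) ∈ U := by
    intro γ h
    simp only [ht, dif_pos h]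
    exact (hQex γ h).choose_spec
  -- stabilize the bound
  obtain ⟨x₀, hx₀⟩ : ∃ x₀, {a : X | t (i a) = x₀} ∈ U := by
    apply hcomp.exists_mem_of_iUnion_mem hmkDκ
    have : (⋃ x, {a : X | t (i a) = x}) = Set.univ := by
      ext a; simp only [Set.mem_iUnion, Set.mem_setOf_eq, Set.mem_univ, iff_true]
      exact ⟨t (i a), rfl⟩
    rw [this]
    exact Filter.univ_mem
  set S := {a : X | t (i a) = x₀} with hS
  set θ₀ := j x₀ with hθ₀
  have hθ₀δ : θ₀ < δo := hjlt x₀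
  have hQS : ∀ a : X, a ∈ S → Q (i a) x₀ ∈ U := by
    intro a ha
    have := htspec (i a) (hilt a)
    rwa [ha] at this
  -- the branch through the tree given by the stabilized bound
  set g : S → T.Node := fun a => f (i a.1) θ₀ with hg
  have hght : ∀ a : S, T.ht (g a) = i a.1 := fun a => hf1 (i a.1) (hilt a.1) θ₀ hθ₀δ
  have hginj : Function.Injective g := by
    intro a b hab
    have : i a.1 = i b.1 := by rw [← hght a, ← hght b, hab]
    exact Subtype.ext (hiinj this)
  have hCchain : T.IsChainIn (Set.range g) := by
    rintro _ ⟨a, rfl⟩ _ ⟨b, rfl⟩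
    obtain ⟨c, hca, hcb⟩ := Ultrafilter.nonempty_of_mem
      (Filter.inter_mem (hQS a.1 a.2) (hQS b.1 b.2))
    have hlt1 : T.lt (g a) (f (i c) θ₀) := hca.2 θ₀ le_rfl hθ₀δ
    have hlt2 : T.lt (g b) (f (i c) θ₀) := hcb.2 θ₀ le_rfl hθ₀δ
    rcases T.below_linear hlt1 hlt2 with h | h | h
    · exact Or.inr (Or.inl h)
    · exact Or.inl h
    · exact Or.inr (Or.inr h)
  have hlt : Cardinal.mk (Set.range g) < κ := hchain _ hCchain
  rw [Cardinal.mk_range_eq g hginj] at hlt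
  exact hcomp.small_not_mem hnp hlt hx₀
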